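/- Let f be convex on ℝ^n with minimizer x*. For the deterministic heavy-ball subgradient method x_{k+1} = x_k − α g_k + β(x_k − x_{k−1}), x_{−1} = x_0, with g_k ∈ ∂f(x_k), ‖g_k‖ ≤ G, 0 < β < 1, and step size α = C/√(t+1), the averaged iterate x̂_t = (1/(t+1))Σ_{k=0}^t x_k satisfies f(x̂_t) − f(x*) ≤ (β/((1−β)(t+1)))(f(x_0) − f(x*)) + ((1−β)‖x_0 − x*‖²)/(2C√(t+1)) + (C G²)/(2(1−β)√(t+1)). -/

import Mathlib

open Finset
open scoped InnerProductSpace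

set_option maxHeartbeats 2000000 in
/-- Deterministic special case of Theorem 1 (Convergence of FSG): convergence rate of the
averaged iterate of the heavy-ball subgradient method with step size `α = C/√(t+1)`. -/
theorem heavy_ball_averaged_convergence (n : ℕ)
    (f : EuclideanSpace ℝ (Fin n) → ℝ) (hf : ConvexOn ℝ Set.univ f)
    (xstar : EuclideanSpace ℝ (Fin n)) (hmin : ∀ y, f xstar ≤ f y)
    (t : ℕ) (C G α β : ℝ) (hC : 0 < C) (hG : 0 < G)
    (hβ0 : 0 < β) (hβ1 : β < 1)
    (hα : α = C / Real.sqrt (t + 1))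
    (x g : ℕ → EuclideanSpace ℝ (Fin n))
    (hsub : ∀ k, ∀ y, f (x k) + ⟪g k, y - x k⟫_ℝ ≤ f y)   -- g_k ∈ ∂f(x_k)
    (hGk : ∀ k, ‖g k‖ ≤ G)
    (hx0 : x 1 = x 0 - α • g 0)   -- the k = 0 step, using x_{-1} = x_0
    (hx : ∀ k ≥ 1, x (k + 1) = x k - α • g k + β • (x k - x (k - 1)))
    (xhat : EuclideanSpace ℝ (Fin n))
    (hxhat : xhat = (1 / ((t : ℝ) + 1)) • ∑ k ∈ Finset.range (t + 1), x k) :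
    f xhat - f xstar ≤
      (β / ((1 - β) * (t + 1))) * (f (x 0) - f xstar)
      + ((1 - β) * ‖x 0 - xstar‖ ^ 2) / (2 * C * Real.sqrt (t + 1))
      + (C * G ^ 2) / (2 * (1 - β) * Real.sqrt (t + 1)) := by
  have hβ' : 0 < 1 - β := by linarith
  set s : ℝ := Real.sqrt ((t : ℝ) + 1) with hs_def
  have hs : 0 < s := Real.sqrt_pos.mpr (by positivity)
  have hs2 : s * s = (t : ℝ) + 1 := Real.mul_self_sqrt (by positivity)
  have hα0 : 0 < α := by rw [hα]; positivity
  set c : ℝ := β / (1 - β) with hc_def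
  have hc0 : 0 ≤ c := by positivity
  have hc : c * (1 - β) = β := by rw [hc_def, div_mul_cancel₀ _ hβ'.ne']
  set η : ℝ := α / (1 - β) with hη_def
  have hη0 : 0 < η := by positivity
  have hηα : η * (1 - β) = α := by rw [hη_def]; field_simp
  set z : ℕ → EuclideanSpace ℝ (Fin n) := fun k => x k + c • (x k - x (k - 1)) with hz_def
  have hz0 : z 0 = x 0 := by show x 0 + c • (x 0 - x (0 - 1)) = x 0; simp
  have hzstep : ∀ k, z (k + 1) = z k - η • g k := by
    intro k
    rcases Nat.eq_zero_or_pos k with rfl | hk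
    · show x 1 + c • (x 1 - x 0) = (x 0 + c • (x 0 - x 0)) - η • g 0
      rw [hx0]
      match_scalars <;> [skip; skip] <;> (simp only [hc_def, hη_def]; try field_simp [hβ'.ne']; try ring)
    · have hk1 : k - 1 + 1 = k := Nat.succ_pred_eq_of_pos hk
      show x (k+1) + c • (x (k+1) - x ((k+1) - 1)) = (x k + c • (x k - x (k-1))) - η • g k
      rw [Nat.add_sub_cancel, hx k hk]
      match_scalars <;> (simp only [hc_def, hη_def]; try field_simp [hβ'.ne']; try ring)
  -- per-step inequality
  have hstep : ∀ k, ‖z (k+1) - xstar‖^2 ≤ ‖z k - xstar‖^2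
      - 2*η*((f (x k) - f xstar) + c*(f (x k) - f (x (k-1)))) + η^2 * G^2 := by
    intro k
    have h1 : f (x k) - f xstar ≤ ⟪g k, x k - xstar⟫_ℝ := by
      have h := hsub k xstar
      have e : ⟪g k, xstar - x k⟫_ℝ = -⟪g k, x k - xstar⟫_ℝ := by
        rw [← neg_sub, inner_neg_right]
      linarith [h, e.ge, e.le]
    have h2 : f (x k) - f (x (k-1)) ≤ ⟪g k, x k - x (k-1)⟫_ℝ := by
      have h := hsub k (x (k-1))
      have e : ⟪g k, x (k-1) - x k⟫_ℝ = -⟪g k, x k - x (k-1)⟫_ℝ := by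
        rw [← neg_sub, inner_neg_right]
      linarith [h, e.ge, e.le]
    have hzx : z k - xstar = (x k - xstar) + c • (x k - x (k-1)) := by
      show (x k + c • (x k - x (k-1))) - xstar = _
      abel
    have hinner : ⟪z k - xstar, η • g k⟫_ℝ
        = η * ⟪g k, x k - xstar⟫_ℝ + η * (c * ⟪g k, x k - x (k-1)⟫_ℝ) := by
      rw [real_inner_smul_right, hzx, inner_add_left, real_inner_smul_left,
        real_inner_comm (x k - xstar), real_inner_comm (x k - x (k-1))]
      ring
    have hgn : ‖η • g k‖^2 ≤ η^2 * G^2 := by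
      rw [norm_smul, mul_pow]
      have : ‖g k‖^2 ≤ G^2 := by
        have := hGk k
        nlinarith [norm_nonneg (g k)]
      calc ‖η‖^2 * ‖g k‖^2 ≤ ‖η‖^2 * G^2 := by nlinarith [sq_nonneg ‖η‖]
        _ = η^2 * G^2 := by rw [Real.norm_eq_abs, sq_abs]
    have hexp : ‖z (k+1) - xstar‖^2
        = ‖z k - xstar‖^2 - 2 * ⟪z k - xstar, η • g k⟫_ℝ + ‖η • g k‖^2 := by
      rw [hzstep k, sub_right_comm]
      exact norm_sub_sq_real (z k - xstar) (η • g k)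
    rw [hexp, hinner]
    have e1 := mul_le_mul_of_nonneg_left h1 (le_of_lt hη0)
    have e2 := mul_le_mul_of_nonneg_left h2 hc0
    have e3 := mul_le_mul_of_nonneg_left e2 (le_of_lt hη0)
    linarith [e1, e3, hgn]
  clear_value z c η s
  -- summed inequality by induction (abstract form)
  have main : ∀ (D F : ℕ → ℝ) (Fs : ℝ),
      (∀ k, D (k+1) ≤ D k - 2*η*((F k - Fs) + c*(F k - F (k-1))) + η^2*G^2) →
      ∀ m : ℕ, D m + 2*η*(∑ k ∈ Finset.range m, (F k - Fs))
        + 2*η*c*(F (m-1) - F 0) ≤ D 0 + m * (η^2 * G^2) := by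
    intro D F Fs hstep' m
    induction m with
    | zero => simp
    | succ m ih =>
      have h := hstep' m
      rw [Finset.sum_range_succ, Nat.succ_sub_one]
      push_cast
      push_cast at ih
      ring_nf at h ih ⊢
      linarith only [h, ih]
  have hsum := main (fun k => ‖z k - xstar‖^2) (fun k => f (x k)) (f xstar) hstep
  have hkey := hsum (t+1)
  rw [Nat.succ_sub_one, hz0] at hkey
  push_cast at hkey
  have hDnn : (0:ℝ) ≤ ‖z (t+1) - xstar‖^2 := sq_nonneg _
  have hft : f xstar ≤ f (x t) := hmin (x t)
  have hsum2 : 2*η*(∑ k ∈ Finset.range (t+1), (f (x k) - f xstar))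
      ≤ ‖x 0 - xstar‖^2 + ((t:ℝ)+1) * (η^2*G^2) + 2*η*c*(f (x 0) - f xstar) := by
    have h2ηc : (0:ℝ) ≤ 2*η*c := mul_nonneg (mul_nonneg (by norm_num) hη0.le) hc0
    have hmul := mul_le_mul_of_nonneg_left hft h2ηc
    linarith only [hkey, hDnn, hmul]
  -- Jensen
  have hJ : f xhat ≤ (1/((t:ℝ)+1)) * ∑ k ∈ Finset.range (t+1), f (x k) := by
    have hw : ∀ i ∈ Finset.range (t+1), (0:ℝ) ≤ 1/((t:ℝ)+1) := by
      intro i _; positivity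
    have hw1 : ∑ _i ∈ Finset.range (t+1), (1/((t:ℝ)+1)) = 1 := by
      rw [Finset.sum_const, Finset.card_range, nsmul_eq_mul]
      push_cast
      field_simp
    have hmem : ∀ i ∈ Finset.range (t+1), x i ∈ (Set.univ : Set (EuclideanSpace ℝ (Fin n))) := by
      intro i _; trivial
    have := hf.map_sum_le hw hw1 hmem
    rw [hxhat, Finset.smul_sum]
    calc f (∑ k ∈ Finset.range (t+1), (1/((t:ℝ)+1)) • x k)
        ≤ ∑ k ∈ Finset.range (t+1), (1/((t:ℝ)+1)) * f (x k) := this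
      _ = (1/((t:ℝ)+1)) * ∑ k ∈ Finset.range (t+1), f (x k) := by
          rw [Finset.mul_sum]
  have hsplit : ∑ k ∈ Finset.range (t+1), f (x k)
      = (∑ k ∈ Finset.range (t+1), (f (x k) - f xstar)) + ((t:ℝ)+1) * f xstar := by
    rw [Finset.sum_sub_distrib, Finset.sum_const, Finset.card_range]
    push_cast
    ring
  set Q : ℝ := ∑ k ∈ Finset.range (t+1), (f (x k) - f xstar) with hQ_def
  have ht1 : (0:ℝ) < (t:ℝ)+1 := by positivity
  have hgoal1 : f xhat - f xstar ≤ Q / ((t:ℝ)+1) := by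
    rw [hsplit] at hJ
    have : f xhat ≤ (1/((t:ℝ)+1)) * (Q + ((t:ℝ)+1) * f xstar) := hJ
    have e : (1/((t:ℝ)+1)) * (Q + ((t:ℝ)+1) * f xstar) = Q/((t:ℝ)+1) + f xstar := by
      field_simp
    linarith only [this, e]
  have hQle : Q / ((t:ℝ)+1) ≤ (‖x 0 - xstar‖^2 + ((t:ℝ)+1)*(η^2*G^2)
      + 2*η*c*(f (x 0) - f xstar)) / (2*η*((t:ℝ)+1)) := by
    rw [div_le_div_iff₀ ht1 (by positivity)]
    nlinarith [hsum2]
  have hfin : (‖x 0 - xstar‖^2 + ((t:ℝ)+1)*(η^2*G^2) + 2*η*c*(f (x 0) - f xstar))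
      / (2*η*((t:ℝ)+1))
      = (β / ((1 - β) * ((t:ℝ) + 1))) * (f (x 0) - f xstar)
      + ((1 - β) * ‖x 0 - xstar‖ ^ 2) / (2 * C * s)
      + (C * G ^ 2) / (2 * (1 - β) * s) := by
    rw [hη_def, hc_def, hα, ← hs2]
    field_simp
    ring
  linarith [hgoal1, hQle, hfin.le, hfin.ge]
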